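/- Define I1(x,y) = ln(x² + y² − 1) − (1/2)·ln(x⁴ + y⁴) − arctan(x²/y²). Then for every (x,y) ∈ ℝ² with x² + y² > 1 and y ≠ 0, the function I1 is differentiable at (x,y) and (∂I1/∂x)(x,y)·(y(x² − y²) − 2x⁴y) + (∂I1/∂y)(x,y)·(x(x² + y²) − 2x³y²) = 0; that is, I1 is a first integral of the planar system (ẋ, ẏ) = (y(x² − y²) − 2x⁴y, x(x² + y²) − 2x³y²). -/

import Mathlib

/-- The first integral `I1(x,y) = ln(x² + y² − 1) − (1/2)ln(x⁴ + y⁴) − arctan(x²/y²)`. -/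
noncomputable def I1fun : ℝ × ℝ → ℝ := fun p =>
  Real.log (p.1 ^ 2 + p.2 ^ 2 - 1) - (1/2) * Real.log (p.1 ^ 4 + p.2 ^ 4) -
    Real.arctan (p.1 ^ 2 / p.2 ^ 2)

/-- For `x² + y² > 1`, `y ≠ 0`, `I1` is differentiable at `(x,y)`
and its derivative annihilates the vector field
`(y(x² − y²) − 2x⁴y, x(x² + y²) − 2x³y²)`, i.e. `I1` is a first integral. -/
theorem stmt_12 (x y : ℝ) (h : 1 < x ^ 2 + y ^ 2) (hy : y ≠ 0) :
    DifferentiableAt ℝ I1fun (x, y) ∧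
    fderiv ℝ I1fun (x, y)
      (y * (x ^ 2 - y ^ 2) - 2 * x ^ 4 * y,
       x * (x ^ 2 + y ^ 2) - 2 * x ^ 3 * y ^ 2) = 0 := by
  have hy2 : y ^ 2 ≠ 0 := pow_ne_zero 2 hy
  have h1 : x ^ 2 + y ^ 2 - 1 ≠ 0 := by nlinarith
  have h2 : x ^ 4 + y ^ 4 ≠ 0 := by positivity
  have px2 : HasFDerivAt (fun p : ℝ × ℝ => p.1 ^ 2)
      (((2 : ℝ) * x ^ 1) • (ContinuousLinearMap.fst ℝ ℝ ℝ)) (x, y) :=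
    (hasDerivAt_pow 2 x).comp_hasFDerivAt (f := Prod.fst) (x, y) hasFDerivAt_fst
  have py2 : HasFDerivAt (fun p : ℝ × ℝ => p.2 ^ 2)
      (((2 : ℝ) * y ^ 1) • (ContinuousLinearMap.snd ℝ ℝ ℝ)) (x, y) :=
    (hasDerivAt_pow 2 y).comp_hasFDerivAt (f := Prod.snd) (x, y) hasFDerivAt_snd
  have px4 : HasFDerivAt (fun p : ℝ × ℝ => p.1 ^ 4)
      (((4 : ℝ) * x ^ 3) • (ContinuousLinearMap.fst ℝ ℝ ℝ)) (x, y) :=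
    (hasDerivAt_pow 4 x).comp_hasFDerivAt (f := Prod.fst) (x, y) hasFDerivAt_fst
  have py4 : HasFDerivAt (fun p : ℝ × ℝ => p.2 ^ 4)
      (((4 : ℝ) * y ^ 3) • (ContinuousLinearMap.snd ℝ ℝ ℝ)) (x, y) :=
    (hasDerivAt_pow 4 y).comp_hasFDerivAt (f := Prod.snd) (x, y) hasFDerivAt_snd
  have g1 : HasFDerivAt (fun p : ℝ × ℝ => p.1 ^ 2 + p.2 ^ 2 - 1) _ (x, y) :=
    (px2.add py2).sub_const 1
  have g2 : HasFDerivAt (fun p : ℝ × ℝ => p.1 ^ 4 + p.2 ^ 4) _ (x, y) := px4.add py4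
  have inv2 : HasFDerivAt (fun p : ℝ × ℝ => (p.2 ^ 2)⁻¹)
      ((-((y ^ 2) ^ 2)⁻¹) • (((2 : ℝ) * y ^ 1) • (ContinuousLinearMap.snd ℝ ℝ ℝ))) (x, y) :=
    (hasDerivAt_inv hy2).comp_hasFDerivAt (x, y) py2
  have g3 : HasFDerivAt (fun p : ℝ × ℝ => p.1 ^ 2 * (p.2 ^ 2)⁻¹) _ (x, y) := px2.mul inv2
  have F1 := (Real.hasDerivAt_log h1).comp_hasFDerivAt (x, y) g1
  have F2 := (Real.hasDerivAt_log h2).comp_hasFDerivAt (x, y) g2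
  have F3 := (Real.hasDerivAt_arctan (x ^ 2 * (y ^ 2)⁻¹)).comp_hasFDerivAt (x, y) g3
  have hF := (F1.sub (F2.const_mul (1/2 : ℝ))).sub F3
  refine ⟨hF.differentiableAt, ?_⟩
  have hfd : fderiv ℝ I1fun (x, y) = _ := hF.fderiv
  rw [hfd]
  simp only [ContinuousLinearMap.sub_apply, ContinuousLinearMap.add_apply,
    ContinuousLinearMap.smul_apply, ContinuousLinearMap.coe_fst', ContinuousLinearMap.coe_snd',
    smul_eq_mul]
  have h3 : 1 + (x ^ 2 * (y ^ 2)⁻¹) ^ 2 ≠ 0 := by positivity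
  field_simp
  ring
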